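/- Let Ω be a real symmetric n×n matrix whose exponential e^Ω has all eigenvalues in an interval [c, C] with 0 < c ≤ C < ∞. Then the spectral norm of Ψ := ∫₀¹ e^{tΩ} ⊗ e^{(1−t)Ω} dt is at most C: every eigenvalue of Ψ is of the form λ_i (if λ_i = λ_j) or (λ_i − λ_j)/(log λ_i − log λ_j) (if λ_i ≠ λ_j), and in both cases lies in [c, C]. -/

import Mathlib

open Matrix Kronecker

set_option linter.unusedSectionVars false

section auxlemmas

variable {m l : Type*} [Fintype m] [DecidableEq m] [Fintype l] [DecidableEq l]

private lemma sub_kron (A A' : Matrix m m ℝ) (B : Matrix l l ℝ) :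
    (A - A') ⊗ₖ B = A ⊗ₖ B - A' ⊗ₖ B := by
  ext ⟨i1, i2⟩ ⟨j1, j2⟩
  simp [Matrix.kroneckerMap_apply, sub_mul]

private lemma kron_sub (A : Matrix m m ℝ) (B B' : Matrix l l ℝ) :
    A ⊗ₖ (B - B') = A ⊗ₖ B - A ⊗ₖ B' := by
  ext ⟨i1, i2⟩ ⟨j1, j2⟩
  simp [Matrix.kroneckerMap_apply, mul_sub]

private lemma kron_posSemidef {A : Matrix m m ℝ} {B : Matrix l l ℝ}
    (hA : A.PosSemidef) (hB : B.PosSemidef) : (A ⊗ₖ B).PosSemidef := by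
  exact Matrix.PosSemidef.kronecker hA hB

private lemma smul_one_posSemidef {k : ℝ} (hk : 0 ≤ k) :
    ((k • 1 : Matrix m m ℝ)).PosSemidef := by
  rw [Matrix.smul_one_eq_diagonal]
  exact Matrix.PosSemidef.diagonal fun _ => hk

/-- quadratic form bounds from a PosSemidef sandwich -/
private lemma quad_bounds {M : Matrix m m ℝ} {a b : ℝ}
    (h1 : (M - a • 1).PosSemidef) (h2 : (b • 1 - M).PosSemidef) (x : m → ℝ) :
    a * (x ⬝ᵥ x) ≤ x ⬝ᵥ M *ᵥ x ∧ x ⬝ᵥ M *ᵥ x ≤ b * (x ⬝ᵥ x) := by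
  have e1 := h1.dotProduct_mulVec_nonneg x
  have e2 := h2.dotProduct_mulVec_nonneg x
  simp only [star_trivial, Matrix.sub_mulVec, Matrix.smul_mulVec, Matrix.one_mulVec,
    dotProduct_sub, dotProduct_smul, smul_eq_mul] at e1 e2
  constructor <;> linarith

end auxlemmas

section conjlemmas

variable {n : ℕ} {Ω : Matrix (Fin n) (Fin n) ℝ} (hH : Ω.IsHermitian)

private lemma exp_smul_conj (s : ℝ) :
    NormedSpace.exp (s • Ω) =
      (hH.eigenvectorUnitary : Matrix (Fin n) (Fin n) ℝ) *
        Matrix.diagonal (fun i => Real.exp (s * hH.eigenvalues i)) *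
        star (hH.eigenvectorUnitary : Matrix (Fin n) (Fin n) ℝ) := by
  have hstar : ((Unitary.toUnits hH.eigenvectorUnitary)⁻¹ : (Matrix (Fin n) (Fin n) ℝ)ˣ).val
      = star (hH.eigenvectorUnitary : Matrix (Fin n) (Fin n) ℝ) := rfl
  have hsm : s • Ω =
      ((Unitary.toUnits hH.eigenvectorUnitary : (Matrix (Fin n) (Fin n) ℝ)ˣ) :
        Matrix (Fin n) (Fin n) ℝ) *
      Matrix.diagonal (fun i => s * hH.eigenvalues i) *
      (((Unitary.toUnits hH.eigenvectorUnitary)⁻¹ : (Matrix (Fin n) (Fin n) ℝ)ˣ) :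
        Matrix (Fin n) (Fin n) ℝ) := by
    rw [hstar]
    conv_lhs => rw [hH.spectral_theorem]
    rw [Unitary.conjStarAlgAut_apply]
    rw [← Matrix.smul_mul, ← Matrix.mul_smul, ← Matrix.diagonal_smul]
    congr 2
  rw [hsm, Matrix.exp_units_conj, hstar, Matrix.exp_diagonal, Pi.exp_def]
  congr 1
  congr 1
  funext i
  rw [Real.exp_eq_exp_ℝ]

end conjlemmas

theorem eigenvalues_Psi_bounded {n : ℕ}
    (Ω : Matrix (Fin n) (Fin n) ℝ) (hΩ : Ω.IsSymm) (c C : ℝ) (hc : 0 < c) (hcC : c ≤ C)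
    (heig : ∀ μ : ℝ, Module.End.HasEigenvalue (NormedSpace.exp Ω).mulVecLin μ →
      μ ∈ Set.Icc c C) :
    let Ψ : Matrix (Fin n × Fin n) (Fin n × Fin n) ℝ :=
      Matrix.of fun p q =>
        ∫ t in (0 : ℝ)..1,
          ((NormedSpace.exp (t • Ω)) ⊗ₖ (NormedSpace.exp ((1 - t) • Ω))) p q
    (∀ μ : ℝ, Module.End.HasEigenvalue Ψ.mulVecLin μ → μ ∈ Set.Icc c C) ∧
    (∀ x : Fin n × Fin n → ℝ, x ⬝ᵥ Ψ.mulVec x ≤ C * (x ⬝ᵥ x)) := by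
  intro Ψ
  classical
  have hH : Ω.IsHermitian := by
    rw [Matrix.IsHermitian, Matrix.conjTranspose_eq_transpose_of_trivial]; exact hΩ
  have hC : (0:ℝ) < C := lt_of_lt_of_le hc hcC
  set U : Matrix (Fin n) (Fin n) ℝ := (hH.eigenvectorUnitary : Matrix (Fin n) (Fin n) ℝ)
    with hUdef
  set d : Fin n → ℝ := hH.eigenvalues with hddef
  have hU1 : U * star U = 1 := by rw [hUdef]; exact Unitary.coe_mul_star_self _
  -- each exp (d i) is an eigenvalue of exp Ω
  have hmem : ∀ i, Real.exp (d i) ∈ Set.Icc c C := by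
    intro i
    apply heig
    have h1 : NormedSpace.exp Ω
        = U * Matrix.diagonal (fun j => Real.exp (1 * d j)) * star U := by
      simpa using exp_smul_conj hH 1
    have hEv : (NormedSpace.exp Ω) *ᵥ ⇑(hH.eigenvectorBasis i)
        = Real.exp (d i) • ⇑(hH.eigenvectorBasis i) := by
      rw [h1, ← Matrix.mulVec_mulVec, ← Matrix.mulVec_mulVec]
      rw [hUdef, hddef, Matrix.IsHermitian.star_eigenvectorUnitary_mulVec,
        Matrix.diagonal_mulVec_single]
      have h2 : (Pi.single i (Real.exp (1 * hH.eigenvalues i) * 1) : Fin n → ℝ)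
          = Real.exp (hH.eigenvalues i) • (Pi.single i 1 : Fin n → ℝ) := by
        rw [← Pi.single_smul]; simp
      rw [h2, Matrix.mulVec_smul, Matrix.IsHermitian.eigenvectorUnitary_mulVec]
    have hne : ⇑(hH.eigenvectorBasis i) ≠ 0 := by
      intro h0
      exact hH.eigenvectorBasis.orthonormal.ne_zero i (by ext j; exact congrFun h0 j)
    exact Module.End.hasEigenvalue_of_hasEigenvector
      ⟨Module.End.mem_eigenspace_iff.mpr (by simpa [Matrix.mulVecLin_apply] using hEv), hne⟩
  -- conjugated diagonal matrices
  have hconjPSD : ∀ f : Fin n → ℝ, (∀ i, 0 ≤ f i) →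
      (U * Matrix.diagonal f * star U).PosSemidef := by
    intro f hf
    have h := (Matrix.PosSemidef.diagonal hf).mul_mul_conjTranspose_same U
    simpa [Matrix.star_eq_conjTranspose] using h
  have hconj_const : ∀ k : ℝ, U * Matrix.diagonal (fun _ : Fin n => k) * star U
      = k • (1 : Matrix (Fin n) (Fin n) ℝ) := by
    intro k
    rw [← Matrix.smul_one_eq_diagonal, Matrix.mul_smul, mul_one, Matrix.smul_mul, hU1]
  have hrw : ∀ f g : Fin n → ℝ,
      U * Matrix.diagonal f * star U - U * Matrix.diagonal g * star U
        = U * Matrix.diagonal (f - g) * star U := by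
    intro f g
    have hdd : Matrix.diagonal (f - g) = Matrix.diagonal f - Matrix.diagonal g := by
      ext i j
      by_cases h : i = j <;> simp [Matrix.diagonal_apply, h]
    rw [hdd, Matrix.mul_sub, Matrix.sub_mul]
  -- sandwich for exp (s • Ω), s ∈ [0,1]
  have hsand : ∀ s : ℝ, s ∈ Set.Icc (0:ℝ) 1 →
      (NormedSpace.exp (s • Ω) - c ^ s • 1).PosSemidef ∧
      ((C ^ s) • 1 - NormedSpace.exp (s • Ω)).PosSemidef ∧
      (NormedSpace.exp (s • Ω)).PosSemidef := by
    intro s hs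
    have hde : ∀ i, c ^ s ≤ Real.exp (s * d i) ∧ Real.exp (s * d i) ≤ C ^ s := by
      intro i
      have h1 := (hmem i).1
      have h2 := (hmem i).2
      have hlc : Real.log c ≤ d i := (Real.log_le_iff_le_exp hc).mpr h1
      have hlC : d i ≤ Real.log C := (Real.le_log_iff_exp_le hC).mpr h2
      constructor
      · rw [Real.rpow_def_of_pos hc]
        exact Real.exp_le_exp.mpr (by nlinarith [hs.1])
      · rw [Real.rpow_def_of_pos hC]
        exact Real.exp_le_exp.mpr (by nlinarith [hs.1])
    have hexp := exp_smul_conj hH s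
    rw [← hddef, ← hUdef] at hexp
    refine ⟨?_, ?_, ?_⟩
    · rw [hexp, ← hconj_const (c ^ s), hrw]
      exact hconjPSD _ fun i => sub_nonneg.mpr (hde i).1
    · rw [hexp, ← hconj_const (C ^ s), hrw]
      exact hconjPSD _ fun i => sub_nonneg.mpr (hde i).2
    · rw [hexp]
      exact hconjPSD _ fun i => (Real.exp_pos _).le
  -- the Kronecker integrand
  set K : ℝ → Matrix (Fin n × Fin n) (Fin n × Fin n) ℝ :=
    fun t => (NormedSpace.exp (t • Ω)) ⊗ₖ (NormedSpace.exp ((1 - t) • Ω)) with hKdef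
  have hKsand : ∀ t : ℝ, t ∈ Set.Icc (0:ℝ) 1 → ∀ x : Fin n × Fin n → ℝ,
      c * (x ⬝ᵥ x) ≤ x ⬝ᵥ (K t) *ᵥ x ∧ x ⬝ᵥ (K t) *ᵥ x ≤ C * (x ⬝ᵥ x) := by
    intro t ht x
    obtain ⟨hA1, hA2, hA0⟩ := hsand t ht
    obtain ⟨hB1, hB2, hB0⟩ := hsand (1 - t) ⟨by linarith [ht.2], by linarith [ht.1]⟩
    have hCt : C ^ t * C ^ (1 - t) = C := by
      rw [← Real.rpow_add hC]; norm_num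
    have hct : c ^ t * c ^ (1 - t) = c := by
      rw [← Real.rpow_add hc]; norm_num
    have hub : ((C • 1 : Matrix (Fin n × Fin n) (Fin n × Fin n) ℝ) - K t).PosSemidef := by
      have hid : (C • 1 : Matrix (Fin n × Fin n) (Fin n × Fin n) ℝ) - K t
          = ((C ^ t) • 1) ⊗ₖ ((C ^ (1 - t)) • 1 - NormedSpace.exp ((1 - t) • Ω))
            + ((C ^ t) • 1 - NormedSpace.exp (t • Ω)) ⊗ₖ NormedSpace.exp ((1 - t) • Ω) := by
        rw [hKdef]
        rw [kron_sub, sub_kron, Matrix.smul_kronecker, Matrix.kronecker_smul,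
          Matrix.smul_kronecker, Matrix.one_kronecker_one, smul_smul, hCt]
        abel
      rw [hid]
      exact (kron_posSemidef (smul_one_posSemidef (Real.rpow_nonneg hC.le t)) hB2).add
        (kron_posSemidef hA2 hB0)
    have hlb : (K t - (c • 1 : Matrix (Fin n × Fin n) (Fin n × Fin n) ℝ)).PosSemidef := by
      have hid : K t - (c • 1 : Matrix (Fin n × Fin n) (Fin n × Fin n) ℝ)
          = (NormedSpace.exp (t • Ω) - (c ^ t) • 1) ⊗ₖ NormedSpace.exp ((1 - t) • Ω)
            + ((c ^ t) • 1) ⊗ₖ (NormedSpace.exp ((1 - t) • Ω) - (c ^ (1 - t)) • 1) := by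
        rw [hKdef]
        rw [kron_sub, sub_kron, Matrix.smul_kronecker, Matrix.kronecker_smul,
          Matrix.smul_kronecker, Matrix.one_kronecker_one, smul_smul,
          mul_comm (c ^ (1 - t)) (c ^ t), hct]
        abel
      rw [hid]
      exact (kron_posSemidef hA1 hB0).add
        (kron_posSemidef (smul_one_posSemidef (Real.rpow_nonneg hc.le t)) hB1)
    exact quad_bounds hlb hub x
  -- continuity of the entries
  have hcontE : ∀ i j : Fin n, Continuous fun s : ℝ => (NormedSpace.exp (s • Ω)) i j := by
    intro i j
    have h1 : (fun s : ℝ => (NormedSpace.exp (s • Ω)) i j)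
        = fun s : ℝ => ∑ k, U i k * Real.exp (s * d k) * (star U) k j := by
      funext s
      rw [exp_smul_conj hH s, ← hddef, ← hUdef, Matrix.mul_apply]
      simp only [Matrix.mul_diagonal]
    rw [h1]
    refine continuous_finset_sum _ fun k _ => ?_
    have : Continuous fun s : ℝ => Real.exp (s * d k) :=
      Real.continuous_exp.comp (continuous_id.mul continuous_const)
    exact (continuous_const.mul this).mul continuous_const
  have hcontK : ∀ p q : Fin n × Fin n, Continuous fun t : ℝ => K t p q := by
    intro p q
    have h1 : (fun t : ℝ => K t p q)
        = fun t : ℝ => (NormedSpace.exp (t • Ω)) p.1 q.1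
            * ((fun s : ℝ => (NormedSpace.exp (s • Ω)) p.2 q.2) (1 - t)) := by
      funext t; rw [hKdef]; rfl
    rw [h1]
    exact (hcontE p.1 q.1).mul ((hcontE p.2 q.2).comp (continuous_const.sub continuous_id))
  -- exchanging sum and integral
  have key : ∀ x : Fin n × Fin n → ℝ,
      x ⬝ᵥ Ψ *ᵥ x = ∫ t in (0:ℝ)..1, x ⬝ᵥ (K t) *ᵥ x := by
    intro x
    have h1 : x ⬝ᵥ Ψ *ᵥ x = ∑ p, ∑ q, x p * (Ψ p q * x q) := by
      simp [dotProduct, Matrix.mulVec, Finset.mul_sum]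
    have hPsi : ∀ p q : Fin n × Fin n, Ψ p q = ∫ t in (0:ℝ)..1, K t p q := by
      intro p q; rfl
    rw [h1]
    calc ∑ p, ∑ q, x p * (Ψ p q * x q)
        = ∑ p, ∑ q, ∫ t in (0:ℝ)..1, x p * (K t p q * x q) := by
          refine Finset.sum_congr rfl fun p _ => Finset.sum_congr rfl fun q _ => ?_
          rw [hPsi p q, ← intervalIntegral.integral_mul_const,
            ← intervalIntegral.integral_const_mul]
      _ = ∑ p, ∫ t in (0:ℝ)..1, ∑ q, x p * (K t p q * x q) := by
          refine Finset.sum_congr rfl fun p _ => ?_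
          refine (intervalIntegral.integral_finset_sum fun q _ => ?_).symm
          exact (continuous_const.mul ((hcontK p q).mul continuous_const)).intervalIntegrable _ _
      _ = ∫ t in (0:ℝ)..1, ∑ p, ∑ q, x p * (K t p q * x q) := by
          refine (intervalIntegral.integral_finset_sum fun p _ => ?_).symm
          refine (continuous_finset_sum _ fun q _ => ?_).intervalIntegrable _ _
          exact continuous_const.mul ((hcontK p q).mul continuous_const)
      _ = ∫ t in (0:ℝ)..1, x ⬝ᵥ (K t) *ᵥ x := by
          refine intervalIntegral.integral_congr fun t _ => ?_
          simp [dotProduct, Matrix.mulVec, Finset.mul_sum]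
  have hcontq : ∀ x : Fin n × Fin n → ℝ, Continuous fun t : ℝ => x ⬝ᵥ (K t) *ᵥ x := by
    intro x
    have h1 : (fun t : ℝ => x ⬝ᵥ (K t) *ᵥ x)
        = fun t : ℝ => ∑ p, ∑ q, x p * (K t p q * x q) := by
      funext t; simp [dotProduct, Matrix.mulVec, Finset.mul_sum]
    rw [h1]
    exact continuous_finset_sum _ fun p _ => continuous_finset_sum _ fun q _ =>
      continuous_const.mul ((hcontK p q).mul continuous_const)
  have hquadU : ∀ x : Fin n × Fin n → ℝ, x ⬝ᵥ Ψ *ᵥ x ≤ C * (x ⬝ᵥ x) := by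
    intro x
    rw [key x]
    calc (∫ t in (0:ℝ)..1, x ⬝ᵥ (K t) *ᵥ x) ≤ ∫ _t in (0:ℝ)..1, C * (x ⬝ᵥ x) := by
          refine intervalIntegral.integral_mono_on zero_le_one
            ((hcontq x).intervalIntegrable _ _) intervalIntegrable_const fun t ht => ?_
          exact (hKsand t ht x).2
      _ = C * (x ⬝ᵥ x) := by simp
  have hquadL : ∀ x : Fin n × Fin n → ℝ, c * (x ⬝ᵥ x) ≤ x ⬝ᵥ Ψ *ᵥ x := by
    intro x
    rw [key x]
    calc c * (x ⬝ᵥ x) = ∫ _t in (0:ℝ)..1, c * (x ⬝ᵥ x) := by simp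
      _ ≤ ∫ t in (0:ℝ)..1, x ⬝ᵥ (K t) *ᵥ x := by
          refine intervalIntegral.integral_mono_on zero_le_one intervalIntegrable_const
            ((hcontq x).intervalIntegrable _ _) fun t ht => ?_
          exact (hKsand t ht x).1
  refine ⟨?_, hquadU⟩
  intro μ hμ
  obtain ⟨v, hv⟩ := hμ.exists_hasEigenvector
  have hveq : Ψ *ᵥ v = μ • v := by
    have h := Module.End.mem_eigenspace_iff.mp hv.1
    simpa [Matrix.mulVecLin_apply] using h
  have hvv : 0 < v ⬝ᵥ v := by
    rcases eq_or_lt_of_le (Finset.sum_nonneg fun i _ => mul_self_nonneg (v i)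
      : (0:ℝ) ≤ v ⬝ᵥ v) with h | h
    · exact absurd (dotProduct_self_eq_zero.mp h.symm) hv.2
    · exact h
  have h1 : v ⬝ᵥ Ψ *ᵥ v = μ * (v ⬝ᵥ v) := by
    rw [hveq, dotProduct_smul, smul_eq_mul]
  have h2 := hquadL v
  have h3 := hquadU v
  rw [h1] at h2 h3
  exact ⟨le_of_mul_le_mul_right h2 hvv, le_of_mul_le_mul_right h3 hvv⟩
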